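/- Let Q be a polynomial of degree d and ν a real number. Then there exists a polynomial P of degree at most d+1 such that Δ(Q(|x|²)(1+|x|²)^ν) = P(|x|²)(1+|x|²)^(ν−2) for all x in ℝ^p, where Δ is the Euclidean Laplacian on ℝ^p. -/

import Mathlib

open Real

open Polynomial

private lemma hasDerivAt_aux (R : Polynomial ℝ) (μ : ℝ) (s : ℝ) (hs : 0 < 1 + s) :
    HasDerivAt (fun u : ℝ => R.eval u * (1 + u) ^ μ)
      (R.derivative.eval s * (1 + s) ^ μ + μ * (R.eval s * (1 + s) ^ (μ - 1))) s := by
  have h1 : HasDerivAt (fun u : ℝ => 1 + u) 1 s := (hasDerivAt_id s).const_add 1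
  have h2 : HasDerivAt (fun u : ℝ => (1 + u) ^ μ) (μ * (1 + s) ^ (μ - 1)) s := by
    have := h1.rpow_const (p := μ) (Or.inl hs.ne')
    simpa using this
  have h3 := (R.hasDerivAt s).mul h2
  convert h3 using 1
  all_goals first | rfl | ring

/-- The Euclidean Laplacian on `ℝ^p`: sum of second partial derivatives. -/
noncomputable def laplacian {p : ℕ} (f : (Fin p → ℝ) → ℝ) (x : Fin p → ℝ) : ℝ :=
  ∑ i, iteratedDeriv 2 (fun t => f (Function.update x i t)) (x i)

/-- for a polynomial `Q` of degree `d` and `ν ∈ ℝ`, there is a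
polynomial `P` of degree at most `d+1` with
`Δ(Q(|x|²)(1+|x|²)^ν) = P(|x|²)(1+|x|²)^(ν-2)` on `ℝ^p`. -/
theorem laplacian_poly_rpow {p : ℕ} (hp : 1 ≤ p) (Q : Polynomial ℝ) (d : ℕ)
    (hQ : Q.natDegree = d) (ν : ℝ) :
    ∃ P : Polynomial ℝ, P.natDegree ≤ d + 1 ∧
      ∀ x : Fin p → ℝ,
        laplacian (fun y => Q.eval (∑ i, y i ^ 2) * (1 + ∑ i, y i ^ 2) ^ ν) x
          = P.eval (∑ i, x i ^ 2) * (1 + ∑ i, x i ^ 2) ^ (ν - 2) := by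
  classical
  refine ⟨C (2 * (p : ℝ)) * (Q.derivative * (1 + X) ^ 2 + C ν * Q * (1 + X))
      + C 4 * X * (Q.derivative.derivative * (1 + X) ^ 2
        + C (2 * ν) * Q.derivative * (1 + X) + C (ν * (ν - 1)) * Q), ?_, ?_⟩
  · -- degree bound
    have h1X : (1 + X : ℝ[X]).natDegree ≤ 1 := by compute_degree
    have hzero : ∀ R : Polynomial ℝ, R.natDegree = 0 → R.derivative = 0 := by
      intro R hR
      obtain ⟨c, rfl⟩ := Polynomial.natDegree_eq_zero.mp hR
      simp
    have hA : (Q.derivative * (1 + X) ^ 2).natDegree ≤ d + 1 := by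
      rcases Nat.eq_zero_or_pos d with hd | hd
      · rw [hzero Q (hQ.trans hd), zero_mul, natDegree_zero]; omega
      · refine le_trans natDegree_mul_le ?_
        have h1 := Polynomial.natDegree_derivative_le Q
        have h2 : ((1 + X : ℝ[X]) ^ 2).natDegree ≤ 2 := le_trans natDegree_pow_le (by omega)
        omega
    have hB : (C ν * Q * (1 + X)).natDegree ≤ d + 1 := by
      refine le_trans natDegree_mul_le ?_
      have : (C ν * Q).natDegree ≤ d := le_trans (natDegree_C_mul_le _ _) hQ.le
      omega
    have hC : (Q.derivative.derivative * (1 + X) ^ 2).natDegree ≤ d := by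
      rcases Nat.lt_or_ge d 2 with hd | hd
      · have h1 : Q.derivative.natDegree = 0 := by
          have := Polynomial.natDegree_derivative_le Q
          omega
        rw [hzero _ h1, zero_mul, natDegree_zero]; omega
      · refine le_trans natDegree_mul_le ?_
        have h1 := Polynomial.natDegree_derivative_le Q
        have h2 := Polynomial.natDegree_derivative_le Q.derivative
        have h3 : ((1 + X : ℝ[X]) ^ 2).natDegree ≤ 2 := le_trans natDegree_pow_le (by omega)
        omega
    have hD : (C (2 * ν) * Q.derivative * (1 + X)).natDegree ≤ d := by
      rcases Nat.eq_zero_or_pos d with hd | hd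
      · rw [hzero Q (hQ.trans hd), mul_zero, zero_mul, natDegree_zero]; omega
      · refine le_trans natDegree_mul_le ?_
        have h1 : (C (2 * ν) * Q.derivative).natDegree ≤ d - 1 :=
          le_trans (natDegree_C_mul_le _ _) (hQ ▸ Polynomial.natDegree_derivative_le Q)
        omega
    have hE : (C (ν * (ν - 1)) * Q).natDegree ≤ d := le_trans (natDegree_C_mul_le _ _) hQ.le
    refine le_trans (natDegree_add_le _ _) (max_le ?_ ?_)
    · refine le_trans (natDegree_C_mul_le _ _) ?_
      exact le_trans (natDegree_add_le _ _) (max_le hA hB)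
    · refine le_trans natDegree_mul_le ?_
      have h1 : (C (4:ℝ) * X).natDegree ≤ 1 := by compute_degree
      have h2 : (Q.derivative.derivative * (1 + X) ^ 2
          + C (2 * ν) * Q.derivative * (1 + X) + C (ν * (ν - 1)) * Q).natDegree ≤ d :=
        le_trans (natDegree_add_le _ _)
          (max_le (le_trans (natDegree_add_le _ _) (max_le hC hD)) hE)
      omega
  · -- the analytic identity
    intro x
    set s := ∑ i, x i ^ 2 with hs_def
    have hs0 : (0:ℝ) ≤ s := Finset.sum_nonneg fun i _ => sq_nonneg _
    have hs : (0:ℝ) < 1 + s := by linarith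
    set F1fun : ℝ → ℝ := fun u =>
      Q.derivative.eval u * (1 + u) ^ ν + ν * (Q.eval u * (1 + u) ^ (ν - 1)) with hF1fun
    set F2fun : ℝ → ℝ := fun u =>
      (Q.derivative.derivative.eval u * (1 + u) ^ ν
        + ν * (Q.derivative.eval u * (1 + u) ^ (ν - 1)))
      + ν * (Q.derivative.eval u * (1 + u) ^ (ν - 1)
        + (ν - 1) * (Q.eval u * (1 + u) ^ (ν - 1 - 1))) with hF2fun
    have hF1at : ∀ u : ℝ, 0 < 1 + u → HasDerivAt F1fun (F2fun u) u := by
      intro u hu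
      exact (hasDerivAt_aux Q.derivative ν u hu).add
        ((hasDerivAt_aux Q (ν - 1) u hu).const_mul ν)
    have key : ∀ i : Fin p,
        iteratedDeriv 2 (fun t =>
          Q.eval (∑ j, Function.update x i t j ^ 2) *
            (1 + ∑ j, Function.update x i t j ^ 2) ^ ν) (x i)
        = F2fun s * (2 * x i) * (2 * x i) + F1fun s * 2 := by
      intro i
      set c := ∑ j ∈ Finset.univ.erase i, x j ^ 2 with hc
      have hc0 : (0:ℝ) ≤ c := Finset.sum_nonneg fun j _ => sq_nonneg _
      have hcs : c + x i ^ 2 = s := Finset.sum_erase_add _ _ (Finset.mem_univ i)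
      have hsum : ∀ t : ℝ, ∑ j, Function.update x i t j ^ 2 = c + t ^ 2 := by
        intro t
        have h1 : ∀ j, Function.update x i t j ^ 2
            = Function.update (fun k => x k ^ 2) i (t ^ 2) j := fun j =>
          Function.apply_update (fun _ v => v ^ 2) x i t j
        rw [Finset.sum_congr rfl fun j _ => h1 j,
          Finset.sum_update_of_mem (Finset.mem_univ i), hc, Finset.erase_eq]
        ring
      have hpos : ∀ t : ℝ, (0:ℝ) < 1 + (c + t ^ 2) := fun t => by positivity
      have hfun : (fun t : ℝ =>
          Q.eval (∑ j, Function.update x i t j ^ 2) *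
            (1 + ∑ j, Function.update x i t j ^ 2) ^ ν)
          = fun t : ℝ => Q.eval (c + t ^ 2) * (1 + (c + t ^ 2)) ^ ν := by
        funext t; rw [hsum t]
      rw [hfun]
      have hsq : ∀ t : ℝ, HasDerivAt (fun u : ℝ => c + u ^ 2) (2 * t) t := by
        intro t
        have := (hasDerivAt_pow 2 t).const_add c
        simpa using this
      set g1 : ℝ → ℝ := fun t => F1fun (c + t ^ 2) * (2 * t) with hg1def
      have hg : ∀ t : ℝ, HasDerivAt (fun u : ℝ => Q.eval (c + u ^ 2) * (1 + (c + u ^ 2)) ^ ν)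
          (g1 t) t := by
        intro t
        have := (hasDerivAt_aux Q ν (c + t ^ 2) (hpos t)).comp t (hsq t)
        simpa [Function.comp_def, hg1def, hF1fun, mul_comm] using this
      have hderivg : deriv (fun u : ℝ => Q.eval (c + u ^ 2) * (1 + (c + u ^ 2)) ^ ν) = g1 :=
        funext fun t => (hg t).deriv
      have hg1 : HasDerivAt g1
          (F2fun (c + x i ^ 2) * (2 * x i) * (2 * x i) + F1fun (c + x i ^ 2) * 2) (x i) := by
        have hcomp : HasDerivAt (fun t : ℝ => F1fun (c + t ^ 2))
            (F2fun (c + x i ^ 2) * (2 * x i)) (x i) := by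
          have := (hF1at (c + x i ^ 2) (hpos (x i))).comp (x i) (hsq (x i))
          simpa [Function.comp_def] using this
        have hlin : HasDerivAt (fun t : ℝ => 2 * t) 2 (x i) := by
          simpa using (hasDerivAt_id (x i)).const_mul 2
        exact hcomp.mul hlin
      rw [show (2:ℕ) = 1 + 1 from rfl, iteratedDeriv_succ, iteratedDeriv_one, hderivg, hcs] at *
      exact hg1.deriv
    rw [laplacian]
    rw [Finset.sum_congr rfl fun i _ => key i]
    rw [Finset.sum_add_distrib, Finset.sum_const, Finset.card_univ, Fintype.card_fin]
    have hsum2 : ∑ i, F2fun s * (2 * x i) * (2 * x i) = 4 * F2fun s * s := by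
      rw [hs_def, Finset.mul_sum]
      exact Finset.sum_congr rfl fun i _ => by ring
    rw [hsum2, nsmul_eq_mul]
    have e0 : (1 + s) ^ (ν - 1 - 1) = (1 + s) ^ (ν - 2) := by congr 1; ring
    have e1 : (1 + s) ^ (ν - 1) = (1 + s) ^ (ν - 2) * (1 + s) := by
      rw [show ν - 1 = ν - 2 + 1 by ring, Real.rpow_add hs, Real.rpow_one]
    have e2 : (1 + s) ^ ν = (1 + s) ^ (ν - 2) * ((1 + s) * (1 + s)) := by
      rw [show ν = ν - 2 + 1 + 1 by ring, Real.rpow_add hs, Real.rpow_add hs, Real.rpow_one,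
        mul_assoc, show ν - 2 + 1 + 1 - 2 = ν - 2 from by ring]
    simp only [hF2fun, hF1fun, eval_add, eval_mul, eval_pow, eval_C, eval_X, eval_one]
    rw [e0, e1, e2]
    ring
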